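/- The space G(ψ) of measurable functions f with finite norm ‖f‖_{G(ψ)} = sup_{p ∈ (a,b)} ‖f‖_{L^p}/ψ(p) is a Banach space: it is complete in this norm. -/

import Mathlib

open MeasureTheory Set Filter

/-- The moment norm `‖f‖_{G(ψ)} = sup_{p ∈ (a,b)} ‖f‖_{L^p} / ψ(p)`. -/
noncomputable def GNorm {X : Type*} [MeasurableSpace X] (μ : Measure X)
    (a b : ℝ) (ψ : ℝ → ℝ) (f : X → ℝ) : ENNReal :=
  ⨆ p : Set.Ioo a b, eLpNorm f (ENNReal.ofReal (p : ℝ)) μ / ENNReal.ofReal (ψ p)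

lemma eLpNorm_le_GNorm_mul {X : Type*} [MeasurableSpace X] {μ : Measure X}
    {a b : ℝ} {ψ : ℝ → ℝ} (hψ : ∀ p ∈ Set.Ioo a b, 0 < ψ p)
    (f : X → ℝ) {p : ℝ} (hp : p ∈ Set.Ioo a b) :
    eLpNorm f (ENNReal.ofReal p) μ ≤ GNorm μ a b ψ f * ENNReal.ofReal (ψ p) := by
  have h : eLpNorm f (ENNReal.ofReal p) μ / ENNReal.ofReal (ψ p) ≤ GNorm μ a b ψ f :=
    le_iSup (fun q : Set.Ioo a b =>
      eLpNorm f (ENNReal.ofReal (q : ℝ)) μ / ENNReal.ofReal (ψ q)) ⟨p, hp⟩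
  exact (ENNReal.div_le_iff (ENNReal.ofReal_pos.mpr (hψ p hp)).ne' ENNReal.ofReal_ne_top).mp h

/-- The space `G(ψ)` is complete: every Cauchy sequence for the `G(ψ)` norm
converges in the `G(ψ)` norm to some element of `G(ψ)`. -/
theorem GNorm_complete {X : Type*} [MeasurableSpace X] (μ : Measure X)
    [SigmaFinite μ] (a b : ℝ) (ha : 1 ≤ a) (hab : a < b)
    (ψ : ℝ → ℝ) (hψc : ContinuousOn ψ (Set.Ioo a b))
    (hψ : ∀ p ∈ Set.Ioo a b, 0 < ψ p)
    (fs : ℕ → X → ℝ) (hmeas : ∀ n, AEStronglyMeasurable (fs n) μ)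
    (hfin : ∀ n, GNorm μ a b ψ (fs n) < ⊤)
    (hcauchy : ∀ ε : ENNReal, 0 < ε → ∃ N : ℕ, ∀ m ≥ N, ∀ n ≥ N,
      GNorm μ a b ψ (fs n - fs m) ≤ ε) :
    ∃ f : X → ℝ, AEStronglyMeasurable f μ ∧ GNorm μ a b ψ f < ⊤ ∧
      Tendsto (fun n => GNorm μ a b ψ (fs n - f)) atTop (nhds 0) := by
  -- a fixed exponent in the interval
  set p₀ : ℝ := (a + b) / 2 with hp₀def
  have hp₀ : p₀ ∈ Set.Ioo a b := ⟨by simp only [hp₀def]; linarith, by simp only [hp₀def]; linarith⟩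
  have h1p₀ : 1 ≤ p₀ := le_trans ha hp₀.1.le
  set q₀ : ENNReal := ENNReal.ofReal p₀ with hq₀def
  have hq₀1 : 1 ≤ q₀ := by simpa [hq₀def] using ENNReal.one_le_ofReal.mpr h1p₀
  have hq₀0 : q₀ ≠ 0 := (lt_of_lt_of_le zero_lt_one hq₀1).ne'
  set c : ENNReal := ENNReal.ofReal (ψ p₀) with hcdef
  have hc0 : c ≠ 0 := (ENNReal.ofReal_pos.mpr (hψ p₀ hp₀)).ne'
  have hct : c ≠ ⊤ := ENNReal.ofReal_ne_top
  -- each fs m is in ℒ^{q₀}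
  have hmem : ∀ m, MemLp (fs m) q₀ μ := by
    intro m
    refine ⟨hmeas m, lt_of_le_of_lt (eLpNorm_le_GNorm_mul hψ _ hp₀) ?_⟩
    exact ENNReal.mul_lt_top (hfin m) (lt_top_iff_ne_top.mpr hct)
  -- choose a rapidly Cauchy subsequence
  have hεpos : ∀ k : ℕ, (0 : ENNReal) < 2⁻¹ ^ k :=
    fun k => ENNReal.pow_pos (by simp) k
  choose N hN using fun k => hcauchy (2⁻¹ ^ k) (hεpos k)
  let n : ℕ → ℕ := fun k => Nat.rec (N 0) (fun k ih => max (ih + 1) (N (k + 1))) k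
  have hn_mono : StrictMono n :=
    strictMono_nat_of_lt_succ fun k =>
      lt_of_lt_of_le (Nat.lt_succ_self _) (le_max_left _ _)
  have hnN : ∀ k, N k ≤ n k := by
    intro k; cases k
    · exact le_rfl
    · exact le_max_right _ _
  have hkey : ∀ k i j, k ≤ i → k ≤ j →
      GNorm μ a b ψ (fs (n j) - fs (n i)) ≤ 2⁻¹ ^ k := by
    intro k i j hi hj
    exact hN k (n i) (le_trans (hnN k) (hn_mono.monotone hi))
      (n j) (le_trans (hnN k) (hn_mono.monotone hj))
  -- apply completeness of ℒ^{q₀} to the subsequence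
  have hsum : (∑' k : ℕ, (2⁻¹ : ENNReal) ^ k * (c + 1)) ≠ ⊤ := by
    rw [ENNReal.tsum_mul_right, ENNReal.tsum_geometric]
    refine ENNReal.mul_ne_top ?_ (ENNReal.add_ne_top.mpr ⟨hct, ENNReal.one_ne_top⟩)
    simp [ENNReal.sub_half]
  have hcau' : ∀ K i j : ℕ, K ≤ i → K ≤ j →
      eLpNorm (fs (n i) - fs (n j)) q₀ μ < 2⁻¹ ^ K * (c + 1) := by
    intro K i j hi hj
    calc eLpNorm (fs (n i) - fs (n j)) q₀ μ
        ≤ GNorm μ a b ψ (fs (n i) - fs (n j)) * c := eLpNorm_le_GNorm_mul hψ _ hp₀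
      _ ≤ 2⁻¹ ^ K * c := mul_le_mul_left (hkey K j i hj hi) c
      _ < 2⁻¹ ^ K * (c + 1) := by
          refine ENNReal.mul_lt_mul_right (hεpos K).ne' (ENNReal.pow_ne_top (by simp))
            (ENNReal.lt_add_right hct one_ne_zero)
  obtain ⟨f, hfmem, hftend⟩ :=
    MeasureTheory.Lp.cauchy_complete_eLpNorm hq₀1 (fun k => hmem (n k)) hsum hcau'
  -- a.e. convergent sub-subsequence
  have htim : TendstoInMeasure μ (fun k => fs (n k)) atTop f :=
    tendstoInMeasure_of_tendsto_eLpNorm hq₀0 (fun k => hmeas (n k)) hfmem.1 hftend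
  obtain ⟨ns, hns_mono, hae⟩ := htim.exists_seq_tendsto_ae
  -- main estimate
  have hmain : ∀ ε : ENNReal, 0 < ε → ∃ M, ∀ m ≥ M, GNorm μ a b ψ (fs m - f) ≤ ε := by
    intro ε hε
    obtain ⟨M, hM⟩ := hcauchy ε hε
    refine ⟨M, fun m hm => ?_⟩
    refine iSup_le fun q => ?_
    obtain ⟨p, hp⟩ := q
    rw [ENNReal.div_le_iff (ENNReal.ofReal_pos.mpr (hψ p hp)).ne' ENNReal.ofReal_ne_top]
    calc eLpNorm (fs m - f) (ENNReal.ofReal p) μ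
        ≤ atTop.liminf fun k =>
            eLpNorm (fs m - fs (n (ns k))) (ENNReal.ofReal p) μ := by
          refine MeasureTheory.Lp.eLpNorm_lim_le_liminf_eLpNorm
            (fun k => (hmeas m).sub (hmeas _)) _ ?_
          filter_upwards [hae] with x hx
          simpa using tendsto_const_nhds.sub hx
      _ ≤ ε * ENNReal.ofReal (ψ p) := by
          refine liminf_le_of_frequently_le' ?_
          refine (Filter.eventually_atTop.mpr ⟨M, fun k hk => ?_⟩).frequently
          have hnk : M ≤ n (ns k) :=
            le_trans hk (le_trans (hns_mono.le_apply) (hn_mono.le_apply))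
          calc eLpNorm (fs m - fs (n (ns k))) (ENNReal.ofReal p) μ
              ≤ GNorm μ a b ψ (fs m - fs (n (ns k))) * ENNReal.ofReal (ψ p) :=
                eLpNorm_le_GNorm_mul hψ _ hp
            _ ≤ ε * ENNReal.ofReal (ψ p) :=
                mul_le_mul_left (hM (n (ns k)) hnk m hm) _
  refine ⟨f, hfmem.1, ?_, ?_⟩
  · -- finiteness of GNorm f
    obtain ⟨M, hM⟩ := hmain 1 zero_lt_one
    have htri : GNorm μ a b ψ f ≤ GNorm μ a b ψ (fs M - f) + GNorm μ a b ψ (fs M) := by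
      refine iSup_le fun q => ?_
      obtain ⟨p, hp⟩ := q
      have h1p : 1 ≤ ENNReal.ofReal p := ENNReal.one_le_ofReal.mpr (le_trans ha hp.1.le)
      have hadd : eLpNorm f (ENNReal.ofReal p) μ ≤
          eLpNorm (fs M - f) (ENNReal.ofReal p) μ + eLpNorm (fs M) (ENNReal.ofReal p) μ := by
        have : f = (f - fs M) + fs M := by simp
        calc eLpNorm f (ENNReal.ofReal p) μ
            = eLpNorm ((f - fs M) + fs M) (ENNReal.ofReal p) μ := by rw [← this]
          _ ≤ eLpNorm (f - fs M) (ENNReal.ofReal p) μ + eLpNorm (fs M) (ENNReal.ofReal p) μ :=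
              eLpNorm_add_le (hfmem.1.sub (hmeas M)) (hmeas M) h1p
          _ = eLpNorm (fs M - f) (ENNReal.ofReal p) μ + eLpNorm (fs M) (ENNReal.ofReal p) μ := by
              rw [eLpNorm_sub_comm]
      calc eLpNorm f (ENNReal.ofReal p) μ / ENNReal.ofReal (ψ p)
          ≤ (eLpNorm (fs M - f) (ENNReal.ofReal p) μ + eLpNorm (fs M) (ENNReal.ofReal p) μ)
              / ENNReal.ofReal (ψ p) := ENNReal.div_le_div_right hadd _
        _ = eLpNorm (fs M - f) (ENNReal.ofReal p) μ / ENNReal.ofReal (ψ p)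
            + eLpNorm (fs M) (ENNReal.ofReal p) μ / ENNReal.ofReal (ψ p) := ENNReal.add_div
        _ ≤ GNorm μ a b ψ (fs M - f) + GNorm μ a b ψ (fs M) := by
            refine add_le_add ?_ ?_
            · exact le_iSup (fun q : Set.Ioo a b =>
                eLpNorm (fs M - f) (ENNReal.ofReal (q : ℝ)) μ / ENNReal.ofReal (ψ q)) ⟨p, hp⟩
            · exact le_iSup (fun q : Set.Ioo a b =>
                eLpNorm (fs M) (ENNReal.ofReal (q : ℝ)) μ / ENNReal.ofReal (ψ q)) ⟨p, hp⟩
    refine lt_of_le_of_lt htri ?_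
    exact ENNReal.add_lt_top.mpr
      ⟨lt_of_le_of_lt (hM M le_rfl) ENNReal.one_lt_top, hfin M⟩
  · -- convergence in GNorm
    refine ENNReal.tendsto_nhds_zero.mpr fun ε hε => ?_
    obtain ⟨M, hM⟩ := hmain ε hε
    exact Filter.eventually_atTop.mpr ⟨M, fun m hm => hM m hm⟩
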